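/- Let (Sₙ)_{n∈ℕ} be a sequence of games Sₙ = (Tₙ, Aₙ) with injective A-morphisms sₙ : Sₙ → S_{n+1} as connecting maps, and let (gₙ : Sₙ → G)_{n∈ℕ} be a cocone of A-morphisms into a game G = (T, A) (i.e., g_{n+1} ∘ sₙ = gₙ for all n). Then (gₙ) is a colimit cocone in Games_A if and only if every gₙ is injective and the family is jointly in E*, that is, T = ⋃ₙ gₙ[Tₙ] and A = ⋃ₙ ḡₙ[Aₙ]. -/

import Mathlib

universe u v w x y

namespace FraisseGames

/-- The initial segment (of length `n`) of an infinite sequence `R`. -/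
def runPrefix {M : Type u} (R : ℕ → M) (n : ℕ) : List M :=
  (List.range n).map R

/-- `T` is a game tree over `M`: it is closed under initial segments, and every
moment of `T` has a one-step extension in `T`. -/
def IsGameTree {M : Type u} (T : Set (List M)) : Prop :=
  (∀ t ∈ T, ∀ k : ℕ, t.take k ∈ T) ∧ ∀ t ∈ T, ∃ x : M, t ++ [x] ∈ T

/-- The set of runs of the tree `T`. -/
def Runs {M : Type u} (T : Set (List M)) : Set (ℕ → M) :=
  {R | ∀ n : ℕ, runPrefix R n ∈ T}

/-- A game over `M`: a game tree together with a payoff set of runs. -/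
structure Game (M : Type u) : Type u where
  tree : Set (List M)
  isGameTree : IsGameTree tree
  payoff : Set (ℕ → M)
  payoff_subset : payoff ⊆ Runs tree

/-- A game is finite if its set of runs is finite. -/
def Game.IsFin {M : Type u} (G : Game M) : Prop := (Runs G.tree).Finite

/-- The subgame relation `G ≤ G'`. -/
def Game.Sub {M : Type u} (G G' : Game M) : Prop :=
  G.tree ⊆ G'.tree ∧ G.payoff = G'.payoff ∩ Runs G.tree

/-- `f` is a chronological map from `T₁` to `T₂`: it maps `T₁` into `T₂` and it
preserves lengths and truncations of moments. -/
def Chronological {M₁ : Type u} {M₂ : Type v} (T₁ : Set (List M₁)) (T₂ : Set (List M₂))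
    (f : List M₁ → List M₂) : Prop :=
  (∀ t ∈ T₁, f t ∈ T₂) ∧ (∀ t ∈ T₁, (f t).length = t.length) ∧
    ∀ t ∈ T₁, ∀ k : ℕ, f (t.take k) = (f t).take k

/-- `BarMapsTo f R S` says that the map `f̄` on runs induced by the chronological
map `f` sends the run `R` to the run `S`, i.e. `S↾n = f (R↾n)` for all `n`. -/
def BarMapsTo {M₁ : Type u} {M₂ : Type v} (f : List M₁ → List M₂)
    (R : ℕ → M₁) (S : ℕ → M₂) : Prop :=
  ∀ n : ℕ, runPrefix S n = f (runPrefix R n)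

/-- `f` is an A-morphism from `G₁` to `G₂`: a chronological map whose induced map on
runs sends runs won by Ali to runs won by Ali. -/
def IsAMorphism {M₁ : Type u} {M₂ : Type v} (G₁ : Game M₁) (G₂ : Game M₂)
    (f : List M₁ → List M₂) : Prop :=
  Chronological G₁.tree G₂.tree f ∧
    ∀ R ∈ G₁.payoff, ∀ S : ℕ → M₂, BarMapsTo f R S → S ∈ G₂.payoff

/-- `f` is a game embedding from `G₁` to `G₂`: a chronological map, injective on the
tree, such that for every run `R` of `G₁`, `R ∈ A₁ ↔ f̄ R ∈ A₂`. -/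
def IsGameEmbedding {M₁ : Type u} {M₂ : Type v} (G₁ : Game M₁) (G₂ : Game M₂)
    (f : List M₁ → List M₂) : Prop :=
  Chronological G₁.tree G₂.tree f ∧
    (∀ t ∈ G₁.tree, ∀ s ∈ G₁.tree, f t = f s → t = s) ∧
    ∀ R ∈ Runs G₁.tree, ∀ S : ℕ → M₂, BarMapsTo f R S → (R ∈ G₁.payoff ↔ S ∈ G₂.payoff)

/-- `f` is an isomorphism of games from `G₁` onto `G₂`: a game embedding that is
surjective onto the tree of `G₂`. -/
def IsGameIso {M₁ : Type u} {M₂ : Type v} (G₁ : Game M₁) (G₂ : Game M₂)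
    (f : List M₁ → List M₂) : Prop :=
  IsGameEmbedding G₁ G₂ f ∧ ∀ s ∈ G₂.tree, ∃ t ∈ G₁.tree, f t = s

/-- The set of eventually-zero infinite sequences of natural numbers. -/
def c00 : Set (ℕ → ℕ) := {R | ∃ N : ℕ, ∀ n ≥ N, R n = 0}

/-- The game `G_FL = (ω^{<ω}, c₀₀)`. -/
def GFL : Game ℕ where
  tree := Set.univ
  isGameTree := ⟨fun _ _ _ => trivial, fun _ _ => ⟨0, trivial⟩⟩
  payoff := c00
  payoff_subset := fun _ _ _ => trivial

/-- The universal property of a colimit cocone in the category `Games_A` of games and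
A-morphisms: every cocone of A-morphisms over the sequence factors through `q`
via a unique (up to agreement on the tree) A-morphism.  (Morphisms of `Games_A` are
identified when they agree on the game tree.) -/
def IsGamesACoconeColimit.{u', v', w'} {MS : ℕ → Type u'} (S : ∀ n, Game (MS n))
    (s : ∀ n, List (MS n) → List (MS (n + 1)))
    {N : Type v'} (L : Game N) (q : ∀ n, List (MS n) → List N) : Prop :=
  ∀ (P : Type w') (H : Game P) (h : ∀ n, List (MS n) → List P),
    (∀ n, IsAMorphism (S n) H (h n)) →
    (∀ n, ∀ t ∈ (S n).tree, h (n + 1) (s n t) = h n t) →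
    ∃ k : List N → List P, IsAMorphism L H k ∧
      (∀ n, ∀ t ∈ (S n).tree, k (q n t) = h n t) ∧
      ∀ k' : List N → List P, IsAMorphism L H k' →
        (∀ n, ∀ t ∈ (S n).tree, k' (q n t) = h n t) →
        ∀ t ∈ L.tree, k' t = k t

section ListAux

variable {M : Type*}

theorem runPrefix_length (R : ℕ → M) (n : ℕ) : (runPrefix R n).length = n := by
  simp [runPrefix]

theorem runPrefix_take (R : ℕ → M) (j n : ℕ) :
    (runPrefix R n).take j = runPrefix R (min j n) := by
  simp [runPrefix, ← List.map_take, List.take_range]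

theorem runPrefix_succ (R : ℕ → M) (n : ℕ) :
    runPrefix R (n + 1) = runPrefix R n ++ [R n] := by
  simp [runPrefix, List.range_succ]

theorem eq_take_concat (l : List M) (j : ℕ) (h : l.length = j + 1) (hne : l ≠ []) :
    l = l.take j ++ [l.getLast hne] := by
  conv_lhs => rw [← List.dropLast_append_getLast hne]
  rw [List.dropLast_eq_take, h]
  simp

/-- a list whose length is `|u|+1` and whose take is `u` is `u ++ [y]`. -/
theorem exists_concat_of_take (l u : List M) (h : l.length = u.length + 1)
    (ht : l.take u.length = u) : ∃ y, l = u ++ [y] := by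
  have hne : l ≠ [] := by intro e; rw [e] at h; simp at h
  exact ⟨l.getLast hne, by rw [← ht]; exact eq_take_concat l u.length h hne⟩

end ListAux

section PrefMap

variable {M : Type*} {X : Type*}

/-- the chronological map determined by an entry function on prefixes. -/
def prefMap (e : List M → X) (t : List M) : List X :=
  (List.range t.length).map fun i => e (t.take (i + 1))

theorem prefMap_length (e : List M → X) (t : List M) : (prefMap e t).length = t.length := by
  simp [prefMap]

theorem prefMap_getElem' (e : List M → X) (t : List M) (i : ℕ) (hi : i < t.length) :
    (prefMap e t)[i]'(by rw [prefMap_length]; exact hi) = e (t.take (i + 1)) := by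
  simp [prefMap]

theorem prefMap_take (e : List M → X) (t : List M) (j : ℕ) :
    prefMap e (t.take j) = (prefMap e t).take j := by
  apply List.ext_getElem
  · simp [prefMap_length]
  intro i h1 h2
  rw [prefMap_getElem' e _ i (by rwa [prefMap_length] at h1)]
  have h2' : i < (prefMap e t).length := by
    rw [List.length_take] at h2; omega
  have hit : i < t.length := by rwa [prefMap_length] at h2'
  rw [List.getElem_take, prefMap_getElem' e t i hit, List.take_take]
  have : i < j := by
    rw [List.length_take, prefMap_length] at h2; omega
  congr 2
  omega

theorem prefMap_const (e : List M → X) (t : List M) (c : X)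
    (h : ∀ i < t.length, e (t.take (i + 1)) = c) :
    prefMap e t = List.replicate t.length c := by
  apply List.ext_getElem
  · simp [prefMap_length]
  intro i h1 h2
  rw [prefMap_getElem' e t i (by rwa [prefMap_length] at h1)]
  simp only [List.getElem_replicate]
  exact h i (by rwa [prefMap_length] at h1)

end PrefMap
section Dir

variable {MS : ℕ → Type u}

/-- iterate of the connecting maps. -/
def Fit (s : ∀ n, List (MS n) → List (MS (n + 1))) : ∀ (m k : ℕ), List (MS m) → List (MS (m + k))
  | _, 0, t => t
  | m, k + 1, t => s (m + k) (Fit s m k t)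

variable {S : ∀ n, Game (MS n)} {s : ∀ n, List (MS n) → List (MS (n + 1))}

theorem Fit_mem (hs : ∀ n, IsAMorphism (S n) (S (n + 1)) (s n))
    (m k : ℕ) (t : List (MS m)) (ht : t ∈ (S m).tree) :
    Fit s m k t ∈ (S (m + k)).tree := by
  induction k with
  | zero => exact ht
  | succ k ih => exact (hs (m + k)).1.1 _ ih

theorem Fit_inj (hs : ∀ n, IsAMorphism (S n) (S (n + 1)) (s n))
    (hsinj : ∀ n, ∀ t ∈ (S n).tree, ∀ t' ∈ (S n).tree, s n t = s n t' → t = t')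
    (m k : ℕ) (t t' : List (MS m)) (ht : t ∈ (S m).tree) (ht' : t' ∈ (S m).tree)
    (h : Fit s m k t = Fit s m k t') : t = t' := by
  induction k with
  | zero => exact h
  | succ k ih =>
    exact ih (hsinj (m + k) _ (Fit_mem hs m k t ht) _ (Fit_mem hs m k t' ht') h)

theorem Fit_comm (hs : ∀ n, IsAMorphism (S n) (S (n + 1)) (s n))
    {N : Type*} (g : ∀ n, List (MS n) → List N)
    (hcocone : ∀ n, ∀ t ∈ (S n).tree, g (n + 1) (s n t) = g n t)
    (m k : ℕ) (t : List (MS m)) (ht : t ∈ (S m).tree) :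
    g (m + k) (Fit s m k t) = g m t := by
  induction k with
  | zero => rfl
  | succ k ih =>
    have : g ((m + k) + 1) (s (m + k) (Fit s m k t)) = g (m + k) (Fit s m k t) :=
      hcocone (m + k) _ (Fit_mem hs m k t ht)
    exact this.trans ih

variable (s) in
/-- `p₀` at level `m` pushes forward to `p` at level `n`. -/
def Push (m n : ℕ) (p₀ : List (MS m)) (p : List (MS n)) : Prop :=
  ∃ k, ∃ hk : m + k = n, hk ▸ Fit s m k p₀ = p

variable (S s) in
/-- `p` at level `n` is reachable from level `m`. -/
def Reach (m n : ℕ) (p : List (MS n)) : Prop :=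
  ∃ p₀, p₀ ∈ (S m).tree ∧ Push s m n p₀ p

theorem push_self (n : ℕ) (p : List (MS n)) : Push s n n p p := ⟨0, rfl, rfl⟩

theorem reach_self (n : ℕ) (p : List (MS n)) (hp : p ∈ (S n).tree) : Reach S s n n p :=
  ⟨p, hp, push_self n p⟩

theorem push_le {m n : ℕ} {p₀ : List (MS m)} {p : List (MS n)}
    (hp : Push s m n p₀ p) : m ≤ n := by
  obtain ⟨k, hk, -⟩ := hp; omega

theorem push_inj (hs : ∀ n, IsAMorphism (S n) (S (n + 1)) (s n))
    (hsinj : ∀ n, ∀ t ∈ (S n).tree, ∀ t' ∈ (S n).tree, s n t = s n t' → t = t')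
    (m n : ℕ) (p₀ p₁ : List (MS m)) (p : List (MS n))
    (h₀ : p₀ ∈ (S m).tree) (h₁ : p₁ ∈ (S m).tree)
    (hp₀ : Push s m n p₀ p) (hp₁ : Push s m n p₁ p) : p₀ = p₁ := by
  obtain ⟨k, hk, e⟩ := hp₀
  obtain ⟨k', hk', e'⟩ := hp₁
  have hkk : k = k' := by omega
  subst hkk
  subst hk
  exact Fit_inj hs hsinj m k p₀ p₁ h₀ h₁ (e.trans e'.symm)

theorem push_g (hs : ∀ n, IsAMorphism (S n) (S (n + 1)) (s n))
    {N : Type*} (g : ∀ n, List (MS n) → List N)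
    (hcocone : ∀ n, ∀ t ∈ (S n).tree, g (n + 1) (s n t) = g n t)
    (m n : ℕ) (p₀ : List (MS m)) (p : List (MS n)) (h₀ : p₀ ∈ (S m).tree)
    (hp : Push s m n p₀ p) : g n p = g m p₀ := by
  obtain ⟨k, hk, e⟩ := hp
  subst hk
  rw [← e]
  exact Fit_comm hs g hcocone m k p₀ h₀

theorem push_succ (m n : ℕ) (p₀ : List (MS m)) (p : List (MS n))
    (hp : Push s m n p₀ p) : Push s m (n + 1) p₀ (s n p) := by
  obtain ⟨k, hk, e⟩ := hp
  subst hk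
  have e2 : Fit s m k p₀ = p := e
  exact ⟨k + 1, rfl, congrArg (s (m + k)) e2⟩

theorem push_of_push_succ (hs : ∀ n, IsAMorphism (S n) (S (n + 1)) (s n))
    (hsinj : ∀ n, ∀ t ∈ (S n).tree, ∀ t' ∈ (S n).tree, s n t = s n t' → t = t')
    (m n : ℕ) (hmn : m ≤ n) (p₀ : List (MS m)) (p : List (MS n))
    (h₀ : p₀ ∈ (S m).tree) (hp : p ∈ (S n).tree)
    (hpush : Push s m (n + 1) p₀ (s n p)) : Push s m n p₀ p := by
  obtain ⟨k, hk, e⟩ := hpush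
  have hk1 : ∃ k', k = k' + 1 := ⟨k - 1, by omega⟩
  obtain ⟨k', rfl⟩ := hk1
  have hk' : m + k' = n := by omega
  subst hk'
  refine ⟨k', rfl, ?_⟩
  have e0 : Fit s m (k' + 1) p₀ = s (m + k') p := e
  have e' : s (m + k') (Fit s m k' p₀) = s (m + k') p := e0
  exact hsinj _ _ (Fit_mem hs m k' p₀ h₀) _ hp e'

end Dir
section Rep

variable {MS : ℕ → Type u}

open Classical in
/-- canonical representative of a moment: the preimage at the least level it
is reachable from. -/
noncomputable def rep (S : ∀ n, Game (MS n)) (s : ∀ n, List (MS n) → List (MS (n + 1)))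
    (n : ℕ) (p : List (MS n)) : Σ m, List (MS m) :=
  if h : ∃ m, Reach S s m n p then ⟨Nat.find h, (Nat.find_spec h).choose⟩ else ⟨n, p⟩

variable {S : ∀ n, Game (MS n)} {s : ∀ n, List (MS n) → List (MS (n + 1))}

theorem push_out_inj {m n : ℕ} {a : List (MS m)} {u v : List (MS n)}
    (h₁ : Push s m n a u) (h₂ : Push s m n a v) : u = v := by
  obtain ⟨k, hk, e⟩ := h₁
  obtain ⟨k', hk', e'⟩ := h₂
  have : k = k' := by omega
  subst this
  subst hk
  exact e.symm.trans e'

theorem rep_spec (n : ℕ) (p : List (MS n)) (hp : p ∈ (S n).tree) :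
    (rep S s n p).2 ∈ (S (rep S s n p).1).tree ∧
      Push s (rep S s n p).1 n (rep S s n p).2 p ∧
      ∀ m', Reach S s m' n p → (rep S s n p).1 ≤ m' := by
  classical
  have h : ∃ m, Reach S s m n p := ⟨n, reach_self n p hp⟩
  have hrw : rep S s n p = ⟨Nat.find h, (Nat.find_spec h).choose⟩ := dif_pos h
  rw [hrw]
  obtain ⟨ha, hpush⟩ := (Nat.find_spec h).choose_spec
  exact ⟨ha, hpush, fun m' hm' => Nat.find_min' h hm'⟩

theorem rep_unique (hs : ∀ n, IsAMorphism (S n) (S (n + 1)) (s n))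
    (hsinj : ∀ n, ∀ t ∈ (S n).tree, ∀ t' ∈ (S n).tree, s n t = s n t' → t = t')
    (n : ℕ) (p : List (MS n)) (hp : p ∈ (S n).tree)
    (m : ℕ) (a : List (MS m)) (ha : a ∈ (S m).tree) (hpush : Push s m n a p)
    (hmin : ∀ m', Reach S s m' n p → m ≤ m') :
    rep S s n p = ⟨m, a⟩ := by
  obtain ⟨hA, hB, hC⟩ := rep_spec (S := S) (s := s) n p hp
  rcases hrep : rep S s n p with ⟨m₀, a₀⟩
  rw [hrep] at hA hB hC
  have e : m₀ = m := le_antisymm (hC m ⟨a, ha, hpush⟩) (hmin m₀ ⟨a₀, hA, hB⟩)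
  subst e
  have : a₀ = a := push_inj hs hsinj m₀ n a₀ a p hA ha hB hpush
  rw [this]

theorem rep_compat (hs : ∀ n, IsAMorphism (S n) (S (n + 1)) (s n))
    (hsinj : ∀ n, ∀ t ∈ (S n).tree, ∀ t' ∈ (S n).tree, s n t = s n t' → t = t')
    (n : ℕ) (p : List (MS n)) (hp : p ∈ (S n).tree) :
    rep S s (n + 1) (s n p) = rep S s n p := by
  obtain ⟨hA, hB, hC⟩ := rep_spec (S := S) (s := s) n p hp
  have hsp : s n p ∈ (S (n + 1)).tree := (hs n).1.1 p hp
  have hle : (rep S s n p).1 ≤ n := hC n (reach_self n p hp)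
  have := rep_unique hs hsinj (n + 1) (s n p) hsp (rep S s n p).1 (rep S s n p).2 hA
    (push_succ _ _ _ _ hB) ?_
  · exact this.trans (Sigma.eta _)
  · rintro m' ⟨b, hb, hpushb⟩
    have hm' : m' ≤ n + 1 := push_le hpushb
    rcases Nat.lt_or_ge m' (n + 1) with h1 | h1
    · have : Push s m' n b p := push_of_push_succ hs hsinj m' n (by omega) b p hb hp hpushb
      exact hC m' ⟨b, hb, this⟩
    · omega

variable (S s) in
/-- the canonical chronological map from level `n` into the colimit alphabet. -/
noncomputable def cmap (n : ℕ) (t : List (MS n)) : List (Σ m, List (MS m)) :=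
  prefMap (rep S s n) t

theorem cmap_length (n : ℕ) (t : List (MS n)) : (cmap S s n t).length = t.length :=
  prefMap_length _ _

theorem cmap_take (n : ℕ) (t : List (MS n)) (j : ℕ) :
    cmap S s n (t.take j) = (cmap S s n t).take j :=
  prefMap_take _ _ _

theorem cmap_compat (hs : ∀ n, IsAMorphism (S n) (S (n + 1)) (s n))
    (hsinj : ∀ n, ∀ t ∈ (S n).tree, ∀ t' ∈ (S n).tree, s n t = s n t' → t = t')
    (n : ℕ) (t : List (MS n)) (ht : t ∈ (S n).tree) :
    cmap S s (n + 1) (s n t) = cmap S s n t := by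
  have hlen : (s n t).length = t.length := (hs n).1.2.1 t ht
  apply List.ext_getElem
  · rw [cmap_length, cmap_length, hlen]
  intro i h1 h2
  rw [cmap_length, hlen] at h1
  rw [cmap_length] at h2
  unfold cmap
  refine (prefMap_getElem' _ _ i (by rwa [hlen])).trans (Eq.trans ?_ (prefMap_getElem' _ _ i h2).symm)
  rw [← (hs n).1.2.2 t ht (i + 1)]
  exact rep_compat hs hsinj n (t.take (i + 1)) ((S n).isGameTree.1 t ht (i + 1))

theorem cmap_rep_eq {m n : ℕ} {u : List (MS m)} {v : List (MS n)}
    (hne : u ≠ []) (hlen : u.length = v.length)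
    (h : cmap S s m u = cmap S s n v) : rep S s m u = rep S s n v := by
  have hL : 0 < u.length := List.length_pos_iff.mpr hne
  have e1 : (cmap S s m u)[u.length - 1]'(by rw [cmap_length]; omega) =
      rep S s m (u.take (u.length - 1 + 1)) := prefMap_getElem' _ _ _ (by omega)
  have e2 : (cmap S s n v)[u.length - 1]'(by rw [cmap_length]; omega) =
      rep S s n (v.take (u.length - 1 + 1)) := prefMap_getElem' _ _ _ (by omega)
  have : u.take (u.length - 1 + 1) = u := by
    have : u.length - 1 + 1 = u.length := by omega
    rw [this, List.take_length]
  rw [this] at e1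
  have hv : v.take (u.length - 1 + 1) = v := by
    have : u.length - 1 + 1 = v.length := by omega
    rw [this, List.take_length]
  rw [hv] at e2
  rw [← e1, ← e2]
  congr 1

theorem cmap_inj (hs : ∀ n, IsAMorphism (S n) (S (n + 1)) (s n))
    (hsinj : ∀ n, ∀ t ∈ (S n).tree, ∀ t' ∈ (S n).tree, s n t = s n t' → t = t')
    (n : ℕ) (u v : List (MS n)) (hu : u ∈ (S n).tree) (hv : v ∈ (S n).tree)
    (h : cmap S s n u = cmap S s n v) : u = v := by
  have hlen : u.length = v.length := by
    rw [← cmap_length (S := S) (s := s) n u, ← cmap_length (S := S) (s := s) n v, h]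
  rcases eq_or_ne u [] with rfl | hne
  · exact (List.eq_nil_of_length_eq_zero hlen.symm).symm
  have hrep := cmap_rep_eq hne hlen h
  obtain ⟨hAu, hBu, -⟩ := rep_spec (S := S) (s := s) n u hu
  obtain ⟨hAv, hBv, -⟩ := rep_spec (S := S) (s := s) n v hv
  rw [hrep] at hBu
  exact push_out_inj hBu hBv

theorem cmap_g_eq (hs : ∀ n, IsAMorphism (S n) (S (n + 1)) (s n))
    (hsinj : ∀ n, ∀ t ∈ (S n).tree, ∀ t' ∈ (S n).tree, s n t = s n t' → t = t')
    {N : Type*} {G : Game N} (g : ∀ n, List (MS n) → List N)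
    (hg : ∀ n, IsAMorphism (S n) G (g n))
    (hcocone : ∀ n, ∀ t ∈ (S n).tree, g (n + 1) (s n t) = g n t)
    (m n : ℕ) (u : List (MS m)) (v : List (MS n)) (hu : u ∈ (S m).tree)
    (hv : v ∈ (S n).tree) (h : cmap S s m u = cmap S s n v) : g m u = g n v := by
  have hlen : u.length = v.length := by
    rw [← cmap_length (S := S) (s := s) m u, ← cmap_length (S := S) (s := s) n v, h]
  rcases eq_or_ne u [] with rfl | hne
  · have hv0 : v = [] := List.eq_nil_of_length_eq_zero hlen.symm
    subst hv0
    have l1 : (g m []).length = 0 := by rw [(hg m).1.2.1 [] hu]; rfl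
    have l2 : (g n []).length = 0 := by rw [(hg n).1.2.1 [] hv]; rfl
    rw [List.eq_nil_of_length_eq_zero l1, List.eq_nil_of_length_eq_zero l2]
  have hrep := cmap_rep_eq hne hlen h
  obtain ⟨hAu, hBu, -⟩ := rep_spec (S := S) (s := s) m u hu
  obtain ⟨hAv, hBv, -⟩ := rep_spec (S := S) (s := s) n v hv
  rw [hrep] at hBu hAu
  rw [push_g hs g hcocone _ m _ u hAu hBu, push_g hs g hcocone _ n _ v hAv hBv]

end Rep
section CG

variable {MS : ℕ → Type u}

/-- the canonical colimit game. -/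
noncomputable def CGame (S : ∀ n, Game (MS n)) (s : ∀ n, List (MS n) → List (MS (n + 1)))
    (hs : ∀ n, IsAMorphism (S n) (S (n + 1)) (s n)) : Game ((m : ℕ) × List (MS m)) where
  tree := {c | ∃ n, ∃ t ∈ (S n).tree, cmap S s n t = c}
  isGameTree := by
    constructor
    · rintro c ⟨n, t, ht, rfl⟩ j
      exact ⟨n, t.take j, (S n).isGameTree.1 t ht j, cmap_take n t j⟩
    · rintro c ⟨n, t, ht, rfl⟩
      obtain ⟨x, hx⟩ := (S n).isGameTree.2 t ht
      have hlen : (cmap S s n (t ++ [x])).length = (cmap S s n t).length + 1 := by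
        rw [cmap_length, cmap_length, List.length_append]; rfl
      have htake : (cmap S s n (t ++ [x])).take (cmap S s n t).length = cmap S s n t := by
        rw [cmap_length, ← cmap_take, List.take_left]
      obtain ⟨y, hy⟩ := exists_concat_of_take _ _ hlen htake
      exact ⟨y, ⟨n, t ++ [x], hx, hy⟩⟩
  payoff := {Z | ∃ n, ∃ R ∈ (S n).payoff, BarMapsTo (cmap S s n) R Z}
  payoff_subset := by
    rintro Z ⟨n, R, hR, hbar⟩ j
    rw [hbar j]
    exact ⟨n, runPrefix R j, (S n).payoff_subset hR j, rfl⟩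

theorem cmap_isAMorphism (S : ∀ n, Game (MS n)) (s : ∀ n, List (MS n) → List (MS (n + 1)))
    (hs : ∀ n, IsAMorphism (S n) (S (n + 1)) (s n)) (n : ℕ) :
    IsAMorphism (S n) (CGame S s hs) (cmap S s n) := by
  refine ⟨⟨fun t ht => ⟨n, t, ht, rfl⟩, fun t _ => cmap_length n t,
    fun t _ j => cmap_take n t j⟩, ?_⟩
  intro R hR Z hbar
  exact ⟨n, R, hR, hbar⟩

end CG

section Bar

variable {M₁ : Type*} {M₂ : Type*}

theorem exists_barMapsTo {T₁ : Set (List M₁)} {T₂ : Set (List M₂)} {f : List M₁ → List M₂}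
    (hf : Chronological T₁ T₂ f) {R : ℕ → M₁} (hR : R ∈ Runs T₁) :
    ∃ Z : ℕ → M₂, BarMapsTo f R Z := by
  have hlen : ∀ n, (f (runPrefix R n)).length = n := fun n => by
    rw [hf.2.1 _ (hR n), runPrefix_length]
  have hne : ∀ n, f (runPrefix R (n + 1)) ≠ [] := fun n e => by
    have := hlen (n + 1); rw [e] at this; simp at this
  refine ⟨fun n => (f (runPrefix R (n + 1))).getLast (hne n), ?_⟩
  intro j
  induction j with
  | zero =>
    have : (f (runPrefix R 0)).length = 0 := hlen 0
    rw [List.eq_nil_of_length_eq_zero this]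
    rfl
  | succ j ih =>
    rw [runPrefix_succ, ih]
    have e1 : f (runPrefix R (j + 1)) =
        (f (runPrefix R (j + 1))).take j ++ [(f (runPrefix R (j + 1))).getLast (hne j)] :=
      eq_take_concat _ j (hlen (j + 1)) (hne j)
    have e2 : (f (runPrefix R (j + 1))).take j = f (runPrefix R j) := by
      rw [← hf.2.2 _ (hR (j + 1)) j, runPrefix_take, min_eq_left (Nat.le_succ j)]
    rw [← e2]
    exact e1.symm

end Bar
section Mpr

open Classical in
/-- the factorization map out of the colimit. -/
noncomputable def kmap {MS : ℕ → Type u} (S : ∀ n, Game (MS n)) {N : Type v}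
    (g : ∀ n, List (MS n) → List N) {P : Type w} (h : ∀ n, List (MS n) → List P)
    (t : List N) : List P :=
  if ht : ∃ p : (n : ℕ) × List (MS n), p.2 ∈ (S p.1).tree ∧ g p.1 p.2 = t then
    h ht.choose.1 ht.choose.2
  else []

theorem kmap_eq {MS : ℕ → Type u} (S : ∀ n, Game (MS n)) {N : Type v}
    (g : ∀ n, List (MS n) → List N) {P : Type w} (h : ∀ n, List (MS n) → List P)
    (hwd : ∀ (n : ℕ) (u : List (MS n)), u ∈ (S n).tree → ∀ (m : ℕ) (v : List (MS m)),
      v ∈ (S m).tree → g n u = g m v → h n u = h m v)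
    (n : ℕ) (u : List (MS n)) (hu : u ∈ (S n).tree) : kmap S g h (g n u) = h n u := by
  classical
  have ht : ∃ p : (n' : ℕ) × List (MS n'), p.2 ∈ (S p.1).tree ∧ g p.1 p.2 = g n u :=
    ⟨⟨n, u⟩, hu, rfl⟩
  have hrw : kmap S g h (g n u) = h ht.choose.1 ht.choose.2 := dif_pos ht
  rw [hrw]
  exact hwd ht.choose.1 ht.choose.2 ht.choose_spec.1 n u hu ht.choose_spec.2

theorem colimit_of_jointly {MS : ℕ → Type u} (S : ∀ n, Game (MS n))
    (s : ∀ n, List (MS n) → List (MS (n + 1)))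
    (hs : ∀ n, IsAMorphism (S n) (S (n + 1)) (s n))
    {N : Type v} (G : Game N) (g : ∀ n, List (MS n) → List N)
    (hg : ∀ n, IsAMorphism (S n) G (g n))
    (hcocone : ∀ n, ∀ t ∈ (S n).tree, g (n + 1) (s n t) = g n t)
    (ginj : ∀ n, ∀ t ∈ (S n).tree, ∀ t' ∈ (S n).tree, g n t = g n t' → t = t')
    (htree : G.tree = ⋃ n, g n '' (S n).tree)
    (hpay : G.payoff = {Z : ℕ → N | ∃ n, ∃ R ∈ (S n).payoff, BarMapsTo (g n) R Z}) :
    IsGamesACoconeColimit.{u, v, w} S s G g := by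
  intro P H h hAmor hcompat
  have hwd1 : ∀ (n k : ℕ) (u : List (MS n)) (v : List (MS (n + k))), u ∈ (S n).tree →
      v ∈ (S (n + k)).tree → g (n + k) v = g n u → h (n + k) v = h n u := by
    intro n k u v hu hv hgv
    have h1 : g (n + k) (Fit s n k u) = g n u := Fit_comm hs g hcocone n k u hu
    have h2 : Fit s n k u = v := ginj (n + k) _ (Fit_mem hs n k u hu) _ hv (h1.trans hgv.symm)
    rw [← h2]
    exact Fit_comm hs h hcompat n k u hu
  have hwd : ∀ (n : ℕ) (u : List (MS n)), u ∈ (S n).tree → ∀ (m : ℕ) (v : List (MS m)),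
      v ∈ (S m).tree → g n u = g m v → h n u = h m v := by
    intro n u hu m v hv he
    rcases Nat.le_total n m with hle | hle
    · obtain ⟨k, rfl⟩ := Nat.le.dest hle
      exact (hwd1 n k u v hu hv he.symm).symm
    · obtain ⟨k, rfl⟩ := Nat.le.dest hle
      exact hwd1 m k v u hv hu he
  have hkg : ∀ (n : ℕ), ∀ u ∈ (S n).tree, kmap S g h (g n u) = h n u :=
    fun n u hu => kmap_eq S g h hwd n u hu
  have hsurj : ∀ t ∈ G.tree, ∃ n, ∃ u ∈ (S n).tree, g n u = t := by
    intro t htt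
    rw [htree] at htt
    obtain ⟨A, ⟨n, rfl⟩, hA⟩ := htt
    obtain ⟨u, hu, rfl⟩ := hA
    exact ⟨n, u, hu, rfl⟩
  refine ⟨kmap S g h, ⟨⟨?_, ?_, ?_⟩, ?_⟩, hkg, ?_⟩
  · intro t htt
    obtain ⟨n, u, hu, rfl⟩ := hsurj t htt
    rw [hkg n u hu]
    exact (hAmor n).1.1 u hu
  · intro t htt
    obtain ⟨n, u, hu, rfl⟩ := hsurj t htt
    rw [hkg n u hu, (hAmor n).1.2.1 u hu, (hg n).1.2.1 u hu]
  · intro t htt j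
    obtain ⟨n, u, hu, rfl⟩ := hsurj t htt
    rw [hkg n u hu, ← (hg n).1.2.2 u hu j,
      hkg n (u.take j) ((S n).isGameTree.1 u hu j), (hAmor n).1.2.2 u hu j]
  · intro R hR Z hbar
    rw [hpay] at hR
    obtain ⟨n, R', hR', hbar'⟩ := hR
    refine (hAmor n).2 R' hR' Z (fun j => ?_)
    rw [hbar j, hbar' j, hkg n (runPrefix R' j) ((S n).payoff_subset hR' j)]
  · intro k' hk' hfac t htt
    obtain ⟨n, u, hu, rfl⟩ := hsurj t htt
    rw [hfac n u hu, hkg n u hu]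

end Mpr

/-- a cocone of A-morphisms over a sequence of games with injective
connecting A-morphisms is a colimit cocone in `Games_A` iff its components are
injective and the family is jointly in `E*`, i.e. `T = ⋃ₙ gₙ[Tₙ]` and
`A = ⋃ₙ ḡₙ[Aₙ]`. -/
theorem gamesA_colimit_iff_jointly_Estar {MS : ℕ → Type u}
    (S : ∀ n, Game (MS n)) (s : ∀ n, List (MS n) → List (MS (n + 1)))
    (hs : ∀ n, IsAMorphism (S n) (S (n + 1)) (s n))
    (hsinj : ∀ n, ∀ t ∈ (S n).tree, ∀ t' ∈ (S n).tree, s n t = s n t' → t = t')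
    {N : Type v} (G : Game N) (g : ∀ n, List (MS n) → List N)
    (hg : ∀ n, IsAMorphism (S n) G (g n))
    (hcocone : ∀ n, ∀ t ∈ (S n).tree, g (n + 1) (s n t) = g n t) :
    IsGamesACoconeColimit.{u, v, u} S s G g ↔
      ((∀ n, ∀ t ∈ (S n).tree, ∀ t' ∈ (S n).tree, g n t = g n t' → t = t') ∧
        G.tree = ⋃ n, g n '' (S n).tree ∧
        G.payoff = {Z : ℕ → N | ∃ n, ∃ R ∈ (S n).payoff, BarMapsTo (g n) R Z}) := by
  constructor
  · intro colim
    classical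
    -- the canonical colimit game and the factorization into it
    obtain ⟨kC, hkCmor, hkCfac, -⟩ := colim _ (CGame S s hs) (cmap S s)
      (cmap_isAMorphism S s hs) (fun n t ht => cmap_compat hs hsinj n t ht)
    -- injectivity of the cocone components
    have ginj : ∀ n, ∀ t ∈ (S n).tree, ∀ t' ∈ (S n).tree, g n t = g n t' → t = t' := by
      intro n t ht t' ht' he
      apply cmap_inj hs hsinj n t t' ht ht'
      rw [← hkCfac n t ht, ← hkCfac n t' ht', he]
    -- the tree is covered, via the two-valued test game
    have hDDg : ∀ n, ∀ u ∈ (S n).tree, g n u ∈ ⋃ n, g n '' (S n).tree :=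
      fun n u hu => Set.mem_iUnion.mpr ⟨n, ⟨u, hu, rfl⟩⟩
    have hnilD : ∀ n, ∀ u ∈ (S n).tree, ([] : List N) ∈ ⋃ n, g n '' (S n).tree := by
      intro n u hu
      have h0 : g n (u.take 0) = (g n u).take 0 := (hg n).1.2.2 u hu 0
      simp only [List.take_zero] at h0
      exact Set.mem_iUnion.mpr ⟨n, ⟨[], (by simpa using (S n).isGameTree.1 u hu 0), h0⟩⟩
    have htree : G.tree = ⋃ n, g n '' (S n).tree := by
      set DD : Set (List N) := ⋃ n, g n '' (S n).tree with hDDdef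
      -- the test game over two moves
      set HB : Game (ULift.{u} Bool) :=
        ⟨Set.univ, ⟨fun _ _ _ => trivial, fun t _ => ⟨ULift.up false, trivial⟩⟩,
          Set.univ, fun _ _ _ => trivial⟩ with hHB
      have hBmor : ∀ n, IsAMorphism (S n) HB
          (fun t => prefMap (fun _ => ULift.up false) t) :=
        fun n => ⟨⟨fun _ _ => trivial, fun t _ => prefMap_length _ _,
          fun t _ j => prefMap_take _ _ _⟩, fun _ _ _ _ => trivial⟩
      have hBcompat : ∀ n, ∀ t ∈ (S n).tree,
          prefMap (fun _ => (ULift.up false : ULift Bool)) (s n t) =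
            prefMap (fun _ => ULift.up false) t := by
        intro n t ht
        rw [prefMap_const _ _ (ULift.up false) (fun _ _ => rfl),
          prefMap_const _ _ (ULift.up false) (fun _ _ => rfl), (hs n).1.2.1 t ht]
      obtain ⟨kB, -, -, hkBuniq⟩ := colim _ HB _ hBmor hBcompat
      -- two competing factorizations
      set eD : List N → ULift.{u} Bool :=
        fun p => if p ∈ DD then ULift.up false else ULift.up true with heD
      have hf0mor : IsAMorphism G HB (fun t => prefMap (fun _ => ULift.up false) t) :=
        ⟨⟨fun _ _ => trivial, fun t _ => prefMap_length _ _,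
          fun t _ j => prefMap_take _ _ _⟩, fun _ _ _ _ => trivial⟩
      have hf1mor : IsAMorphism G HB (fun t => prefMap eD t) :=
        ⟨⟨fun _ _ => trivial, fun t _ => prefMap_length _ _,
          fun t _ j => prefMap_take _ _ _⟩, fun _ _ _ _ => trivial⟩
      have hf0fac : ∀ n, ∀ t ∈ (S n).tree,
          prefMap (fun _ => (ULift.up false : ULift Bool)) (g n t) =
            prefMap (fun _ => ULift.up false) t := by
        intro n t ht
        rw [prefMap_const _ _ (ULift.up false) (fun _ _ => rfl),
          prefMap_const _ _ (ULift.up false) (fun _ _ => rfl), (hg n).1.2.1 t ht]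
      have hf1fac : ∀ n, ∀ t ∈ (S n).tree,
          prefMap eD (g n t) = prefMap (fun _ => ULift.up false) t := by
        intro n t ht
        rw [prefMap_const eD _ (ULift.up false) ?_,
          prefMap_const _ _ (ULift.up false) (fun _ _ => rfl), (hg n).1.2.1 t ht]
        intro i hi
        have : (g n t).take (i + 1) = g n (t.take (i + 1)) := ((hg n).1.2.2 t ht (i + 1)).symm
        rw [heD]
        simp only [this]
        exact if_pos (hDDg n (t.take (i + 1)) ((S n).isGameTree.1 t ht (i + 1)))
      have e0 := hkBuniq _ hf0mor hf0fac
      have e1 := hkBuniq _ hf1mor hf1fac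
      have hagree : ∀ t ∈ G.tree, prefMap eD t = prefMap (fun _ => ULift.up false) t :=
        fun t ht => (e1 t ht).trans (e0 t ht).symm
      -- a nonempty moment outside `DD` contradicts the agreement
      have key : ∀ t'', t'' ∈ G.tree → t'' ∉ DD → t'' ≠ [] → False := by
        intro t'' htt hnD hne
        have hL : 0 < t''.length := List.length_pos_iff.mpr hne
        have hentry := congrArg
          (fun l : List (ULift.{u} Bool) => l[t''.length - 1]?) (hagree t'' htt)
        have hval1 : (prefMap eD t'')[t''.length - 1]'(by rw [prefMap_length]; omega) =
            eD (t''.take (t''.length - 1 + 1)) := prefMap_getElem' _ _ _ (by omega)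
        have hval0 : (prefMap (fun _ => (ULift.up false : ULift Bool)) t'')[t''.length - 1]'
            (by rw [prefMap_length]; omega) = ULift.up false := prefMap_getElem' _ _ _ (by omega)
        have hfull : t''.take (t''.length - 1 + 1) = t'' := by
          have : t''.length - 1 + 1 = t''.length := by omega
          rw [this, List.take_length]
        rw [hfull] at hval1
        have hq : (prefMap eD t'')[t''.length - 1]? =
            (prefMap (fun _ => (ULift.up false : ULift Bool)) t'')[t''.length - 1]? := hentry
        rw [List.getElem?_eq_getElem (by rw [prefMap_length]; omega),
          List.getElem?_eq_getElem (by rw [prefMap_length]; omega), hval1, hval0] at hq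
        have hvals : (if t'' ∈ DD then (ULift.up false : ULift.{u} Bool) else ULift.up true) =
            ULift.up false := Option.some_injective _ hq
        rw [if_neg hnD] at hvals
        exact Bool.noConfusion (congrArg ULift.down hvals)
      apply Set.Subset.antisymm
      · intro t htt
        by_contra htD
        rcases eq_or_ne t [] with rfl | hne
        · obtain ⟨x, hx⟩ := G.isGameTree.2 [] htt
          have hxD : ([] : List N) ++ [x] ∉ DD := by
            intro hmem
            obtain ⟨A, ⟨n, rfl⟩, hA⟩ := hmem
            obtain ⟨u, hu, -⟩ := hA
            exact htD (hnilD n u hu)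
          exact key ([] ++ [x]) hx hxD (by simp)
        · exact key t htt htD hne
      · intro t htt
        obtain ⟨A, ⟨n, rfl⟩, hA⟩ := htt
        obtain ⟨u, hu, rfl⟩ := hA
        exact (hg n).1.1 u hu
    -- the payoff set is covered, via the canonical colimit game
    have hpay : G.payoff = {Z : ℕ → N | ∃ n, ∃ R ∈ (S n).payoff, BarMapsTo (g n) R Z} := by
      ext Z
      constructor
      · intro hZ
        have hZruns : Z ∈ Runs G.tree := G.payoff_subset hZ
        obtain ⟨W, hbar⟩ := exists_barMapsTo hkCmor.1 hZruns
        obtain ⟨n, R', hR', hbar'⟩ := hkCmor.2 Z hZ W hbar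
        refine ⟨n, R', hR', fun j => ?_⟩
        have h1 : runPrefix Z j ∈ G.tree := hZruns j
        rw [htree] at h1
        obtain ⟨A, ⟨m, rfl⟩, hA⟩ := h1
        obtain ⟨u, hu, he⟩ := hA
        have h3 : cmap S s m u = cmap S s n (runPrefix R' j) := by
          rw [← hkCfac m u hu, he, ← hbar j, hbar' j]
        have h4 := cmap_g_eq hs hsinj g hg hcocone m n u (runPrefix R' j) hu
          ((S n).payoff_subset hR' j) h3
        rw [← he, h4]
      · rintro ⟨n, R', hR', hbar⟩
        exact (hg n).2 R' hR' Z hbar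
    exact ⟨ginj, htree, hpay⟩
  · rintro ⟨ginj, htree, hpay⟩
    exact colimit_of_jointly S s hs G g hg hcocone ginj htree hpay

end FraisseGames
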